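/- Let f(t) ∈ F_{q^n}[t] have degree less than q^n. Then f(t) is (n,q)-quasi-symmetric (i.e., f(t) = F(t, t^q, ..., t^{q^{n-1}}) for some quasi-symmetric polynomial F in n variables over F_{q^n}) if and only if f(t^q) ≡ f(t) modulo the polynomial t^{q^n} − t. -/

import Mathlib

set_option linter.unusedSectionVars false
set_option linter.unusedVariables false

open Polynomial in
theorem qs_fwd (q m : ℕ) (hq2 : 2 ≤ q)
    (K : Type*) [Field K]
    (F : MvPolynomial (Fin (m+1)) K) (hsym : MvPolynomial.rename (finRotate (m+1)) F = F) :
    (X ^ q ^ (m+1) - X : K[X]) ∣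
      ((MvPolynomial.aeval fun i : Fin (m+1) => (X : K[X]) ^ q ^ (i : ℕ)) F).comp (X ^ q)
        - (MvPolynomial.aeval fun i : Fin (m+1) => (X : K[X]) ^ q ^ (i : ℕ)) F := by
  set N := q ^ (m+1) with hN
  rw [← Ideal.Quotient.eq_zero_iff_dvd]
  set I : Ideal K[X] := Ideal.span {(X : K[X]) ^ N - X} with hI
  set πa : K[X] →ₐ[K] K[X] ⧸ I := Ideal.Quotient.mkₐ K I with hπ
  set x : K[X] ⧸ I := πa X with hx
  have hxN : x ^ N = x := by
    have h0 : πa ((X : K[X]) ^ N - X) = 0 := by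
      rw [hπ, Ideal.Quotient.mkₐ_eq_mk]
      exact Ideal.Quotient.eq_zero_iff_mem.2 (Ideal.subset_span rfl)
    rw [map_sub, map_pow, sub_eq_zero] at h0
    exact h0
  rw [← Ideal.Quotient.mkₐ_eq_mk K, map_sub, sub_eq_zero]
  -- LHS
  have hLHS : πa (((MvPolynomial.aeval fun i : Fin (m+1) => (X : K[X]) ^ q ^ (i : ℕ)) F).comp (X ^ q))
      = MvPolynomial.aeval (fun i : Fin (m+1) => x ^ q ^ ((i : ℕ) + 1)) F := by
    rw [Polynomial.comp_eq_aeval]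
    have h1 : πa ((Polynomial.aeval ((X : K[X]) ^ q)) ((MvPolynomial.aeval fun i : Fin (m+1) => (X : K[X]) ^ q ^ (i : ℕ)) F))
        = (πa.comp (Polynomial.aeval ((X : K[X]) ^ q))).comp
            (MvPolynomial.aeval fun i : Fin (m+1) => (X : K[X]) ^ q ^ (i : ℕ)) F := rfl
    rw [h1, MvPolynomial.comp_aeval]
    have hfun : (fun i : Fin (m+1) => (πa.comp (Polynomial.aeval ((X : K[X]) ^ q))) ((X : K[X]) ^ q ^ (i : ℕ)))
        = fun i : Fin (m+1) => x ^ q ^ ((i : ℕ) + 1) := by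
      funext i
      simp only [AlgHom.comp_apply, map_pow, Polynomial.aeval_X]
      rw [← hx, ← pow_mul, ← pow_succ']
    rw [hfun]
  have hRHS : πa ((MvPolynomial.aeval fun i : Fin (m+1) => (X : K[X]) ^ q ^ (i : ℕ)) F)
      = MvPolynomial.aeval (fun i : Fin (m+1) => x ^ q ^ (i : ℕ)) F := by
    have h1 : πa ((MvPolynomial.aeval fun i : Fin (m+1) => (X : K[X]) ^ q ^ (i : ℕ)) F)
        = (πa.comp (MvPolynomial.aeval fun i : Fin (m+1) => (X : K[X]) ^ q ^ (i : ℕ))) F := rfl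
    rw [h1, MvPolynomial.comp_aeval]
    have hfun : (fun i : Fin (m+1) => πa ((X : K[X]) ^ q ^ (i : ℕ)))
        = fun i : Fin (m+1) => x ^ q ^ (i : ℕ) := by
      funext i
      rw [map_pow]
    rw [hfun]
  rw [hLHS, hRHS]
  -- now use the rotation
  conv_rhs => rw [← hsym, MvPolynomial.aeval_rename]
  have hfun : (fun i : Fin (m+1) => x ^ q ^ ((i : ℕ) + 1))
      = (fun i : Fin (m+1) => x ^ q ^ (i : ℕ)) ∘ (finRotate (m+1)) := by
    funext i
    simp only [Function.comp_apply, finRotate_succ_apply]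
    by_cases hi : i = Fin.last m
    · subst hi
      have h2 : ((Fin.last m) + 1 : Fin (m+1)) = 0 := by
        rw [← finRotate_succ_apply, finRotate_last]
      rw [h2]
      simp only [Fin.val_zero, pow_zero, pow_one, Fin.val_last]
      rw [← hN]
      exact hxN
    · have hv : ((i + 1 : Fin (m+1)) : ℕ) = (i : ℕ) + 1 := by
        rw [Fin.val_add_one]
        simp [hi]
      rw [hv]
  rw [hfun]


/-- digits sum back -/
lemma qs_digit_sum (q k : ℕ) : ∀ n, ∑ i ∈ Finset.range n, (k / q^i % q) * q^i = k % q^n := by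
  intro n
  induction n with
  | zero => simp [Nat.mod_one]
  | succ n ih =>
    rw [Finset.sum_range_succ, ih]
    have h1 : k % q ^ (n+1) % q ^ n = k % q ^ n :=
      Nat.mod_mod_of_dvd _ (pow_dvd_pow q (Nat.le_succ n))
    have h2 : k % q ^ (n+1) / q ^ n = k / q ^ n % q := by
      rw [pow_succ, Nat.mod_mul_right_div_self]
    have h3 := Nat.div_add_mod (k % q ^ (n+1)) (q ^ n)
    rw [h1, h2, mul_comm] at h3
    omega

/-- The digit-rotation map on exponents. -/
def qsRot (q m k : ℕ) : ℕ := q * (k % q ^ m) + k / q ^ m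

section
variable {q m k : ℕ} (hq : 1 ≤ q) (hk : k < q ^ (m+1))
include hq hk

lemma qs_div_lt : k / q ^ m < q := by
  have hqm : 0 < q ^ m := Nat.pow_pos hq
  refine (Nat.div_lt_iff_lt_mul hqm).2 ?_
  have : q * q ^ m = q ^ (m+1) := by ring
  omega

lemma qsRot_lt : qsRot q m k < q ^ (m+1) := by
  have hqm : 0 < q ^ m := Nat.pow_pos hq
  have hr : k % q ^ m < q ^ m := Nat.mod_lt _ hqm
  have hc : k / q ^ m < q := qs_div_lt hq hk
  have e1 : q * (k % q ^ m + 1) = q * (k % q ^ m) + q := by ring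
  have e2 : q * (k % q ^ m + 1) ≤ q * q ^ m := Nat.mul_le_mul_left q (by omega)
  have e3 : q * q ^ m = q ^ (m+1) := by ring
  unfold qsRot
  omega

lemma qsRot_mod : qsRot q m k % q = k / q ^ m := by
  unfold qsRot
  rw [Nat.mul_add_mod, Nat.mod_eq_of_lt (qs_div_lt hq hk)]

lemma qsRot_div : qsRot q m k / q = k % q ^ m := by
  unfold qsRot
  rw [Nat.mul_add_div (by omega), Nat.div_eq_of_lt (qs_div_lt hq hk), add_zero]

lemma qsRot_leftInv : q ^ m * (qsRot q m k % q) + qsRot q m k / q = k := by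
  rw [qsRot_mod hq hk, qsRot_div hq hk]
  exact Nat.div_add_mod k (q ^ m)

omit hk in
/-- `q * k = qsRot q m k + (q^(m+1) - 1) * (k / q^m)`. -/
lemma qsRot_qmul : q * k = qsRot q m k + (q ^ (m+1) - 1) * (k / q ^ m) := by
  have h0 := Nat.div_add_mod k (q ^ m)
  have e1 : q * k = q ^ (m+1) * (k / q ^ m) + q * (k % q ^ m) := by
    calc q * k = q * (q ^ m * (k / q ^ m) + k % q ^ m) := by rw [h0]
    _ = q ^ (m+1) * (k / q ^ m) + q * (k % q ^ m) := by ring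
  have e2 : (q ^ (m+1) - 1) * (k / q ^ m) = q ^ (m+1) * (k / q ^ m) - k / q ^ m := by
    rw [Nat.sub_mul, one_mul]
  have e3 : k / q ^ m ≤ q ^ (m+1) * (k / q ^ m) :=
    Nat.le_mul_of_pos_left _ (Nat.pow_pos hq)
  unfold qsRot
  omega

lemma qsRot_digit_zero : qsRot q m k / q ^ 0 % q = k / q ^ m % q := by
  rw [pow_zero, Nat.div_one, qsRot_mod hq hk, Nat.mod_eq_of_lt (qs_div_lt hq hk)]

lemma qsRot_digit_succ {j : ℕ} (hj : j < m) :
    qsRot q m k / q ^ (j+1) % q = k / q ^ j % q := by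
  have h1 : qsRot q m k / q ^ (j+1) = (k % q ^ m) / q ^ j := by
    rw [pow_succ', ← Nat.div_div_eq_div_mul, qsRot_div hq hk]
  rw [h1]
  rw [← Nat.mod_mul_right_div_self, ← Nat.mod_mul_right_div_self k]
  rw [← pow_succ, Nat.mod_mod_of_dvd _ (pow_dvd_pow q hj)]

lemma qsRot_rightInv : qsRot q m (q ^ m * (k % q) + k / q) = k := by
  have hqm : 0 < q ^ m := Nat.pow_pos hq
  have hr' : k / q < q ^ m := by
    refine Nat.div_lt_of_lt_mul ?_
    have : q * q ^ m = q ^ (m+1) := by ring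
    omega
  have h1 : (q ^ m * (k % q) + k / q) % q ^ m = k / q := by
    rw [Nat.mul_add_mod, Nat.mod_eq_of_lt hr']
  have h2 : (q ^ m * (k % q) + k / q) / q ^ m = k % q := by
    rw [Nat.mul_add_div hqm, Nat.div_eq_of_lt hr', add_zero]
  unfold qsRot
  rw [h1, h2]
  exact Nat.div_add_mod k q

lemma qsRot_inv_lt : q ^ m * (k % q) + k / q < q ^ (m+1) := by
  have hqm : 0 < q ^ m := Nat.pow_pos hq
  have hr' : k / q < q ^ m := by
    refine Nat.div_lt_of_lt_mul ?_
    have : q * q ^ m = q ^ (m+1) := by ring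
    omega
  have hc' : k % q < q := Nat.mod_lt _ (by omega)
  calc q ^ m * (k % q) + k / q < q ^ m * (k % q) + q ^ m := by omega
    _ = q ^ m * (k % q + 1) := by ring
    _ ≤ q ^ m * q := Nat.mul_le_mul_left _ (by omega)
    _ = q ^ (m+1) := by ring

open Polynomial in
lemma qs_dvd (K : Type*) [Field K] : (X ^ q ^ (m+1) - X : K[X]) ∣ X ^ (q * k) - X ^ (qsRot q m k) := by
  by_cases hc : k / q ^ m = 0
  · have h0 : q * k = qsRot q m k := by rw [qsRot_qmul hq, hc, mul_zero, add_zero]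
    rw [h0, sub_self]
    exact dvd_zero _
  · have hc1 : 1 ≤ k / q ^ m := Nat.one_le_iff_ne_zero.2 hc
    have hρ1 : 1 ≤ qsRot q m k := by unfold qsRot; omega
    have hN1 : 1 ≤ q ^ (m+1) := Nat.one_le_pow _ _ (by omega)
    have e1 : (X ^ q ^ (m+1) - X : K[X]) = X * (X ^ (q ^ (m+1) - 1) - 1) := by
      rw [mul_sub, mul_one, ← pow_succ']
      have : q ^ (m+1) - 1 + 1 = q ^ (m+1) := by omega
      rw [this]
    have e2 : (X ^ (q * k) - X ^ (qsRot q m k) : K[X])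
        = X ^ (qsRot q m k) * ((X ^ (q ^ (m+1) - 1)) ^ (k / q ^ m) - 1) := by
      rw [mul_sub, mul_one, ← pow_mul, ← pow_add, ← qsRot_qmul hq]
    rw [e1, e2]
    refine mul_dvd_mul ?_ ?_
    · conv_lhs => rw [← pow_one (X : K[X])]
      exact pow_dvd_pow X hρ1
    · simpa using sub_dvd_pow_sub_pow (X ^ (q ^ (m+1) - 1) : K[X]) 1 (k / q ^ m)
end

open Polynomial Finset in
theorem qs_bwd (q m : ℕ) (hq2 : 2 ≤ q) (K : Type*) [Field K]
    (f : K[X]) (hdeg : f.natDegree < q ^ (m+1))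
    (hdvd : (X ^ q ^ (m+1) - X : K[X]) ∣ f.comp (X ^ q) - f) :
    ∃ F : MvPolynomial (Fin (m+1)) K, MvPolynomial.rename (finRotate (m+1)) F = F ∧
      (MvPolynomial.aeval fun i : Fin (m+1) => (X : K[X]) ^ q ^ (i : ℕ)) F = f := by
  have hq1 : 1 ≤ q := by omega
  set N := q ^ (m+1) with hN
  have hN2 : 2 ≤ N := le_trans hq2 (Nat.le_self_pow (by omega) q)
  set d : ℕ → (Fin (m+1) →₀ ℕ) :=
    fun k => Finsupp.equivFunOnFinite.symm fun i : Fin (m+1) => k / q ^ (i : ℕ) % q with hd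
  have hdapp : ∀ k (i : Fin (m+1)), d k i = k / q ^ (i : ℕ) % q := fun k i => rfl
  set g : K[X] := ∑ k ∈ range N, C (f.coeff k) * X ^ (qsRot q m k) with hg
  have hf : f = ∑ k ∈ range N, C (f.coeff k) * X ^ k := by
    conv_lhs => rw [Polynomial.as_sum_range' f N hdeg]
    exact Finset.sum_congr rfl fun k _ => (C_mul_X_pow_eq_monomial).symm
  have hcomp : f.comp (X ^ q) = ∑ k ∈ range N, C (f.coeff k) * X ^ (q * k) := by
    conv_lhs => rw [hf]
    rw [Polynomial.comp_eq_aeval, map_sum]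
    refine Finset.sum_congr rfl fun k _ => ?_
    rw [map_mul, Polynomial.aeval_C, map_pow, Polynomial.aeval_X, ← pow_mul,
      Polynomial.algebraMap_eq]
  have hdvd2 : (X ^ N - X : K[X]) ∣ f.comp (X ^ q) - g := by
    rw [hcomp, hg, ← Finset.sum_sub_distrib]
    refine Finset.dvd_sum fun k hk => ?_
    rw [← mul_sub]
    exact Dvd.dvd.mul_left (qs_dvd hq1 (mem_range.1 hk) K) _
  have hgf : g = f := by
    have hdvd3 : (X ^ N - X : K[X]) ∣ g - f := by
      have h0 : g - f = (f.comp (X ^ q) - f) - (f.comp (X ^ q) - g) := by ring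
      rw [h0]
      exact dvd_sub hdvd hdvd2
    have hdegN : (X ^ N - X : K[X]).degree = (N : WithBot ℕ) := by
      rw [degree_sub_eq_left_of_degree_lt, degree_X_pow]
      rw [degree_X_pow, degree_X]
      exact_mod_cast (by omega : (1:ℕ) < N)
    have hdg : g.degree < (N : WithBot ℕ) := by
      refine lt_of_le_of_lt (Polynomial.degree_sum_le _ _) ?_
      rw [Finset.sup_lt_iff (by exact WithBot.bot_lt_coe N)]
      intro k hk
      refine lt_of_le_of_lt (Polynomial.degree_mul_le_of_le degree_C_le
        (le_of_eq (degree_X_pow _))) ?_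
      rw [zero_add]
      exact_mod_cast qsRot_lt hq1 (mem_range.1 hk)
    have hdf : f.degree < (N : WithBot ℕ) :=
      lt_of_le_of_lt (degree_le_natDegree) (by exact_mod_cast hdeg)
    have h0 : g - f = 0 := by
      refine Polynomial.eq_zero_of_dvd_of_degree_lt hdvd3 ?_
      rw [hdegN]
      exact lt_of_le_of_lt (Polynomial.degree_sub_le g f) (max_lt hdg hdf)
    exact sub_eq_zero.1 h0
  have hcoeff : ∀ k < N, f.coeff (qsRot q m k) = f.coeff k := by
    intro k hk
    have h1 : g.coeff (qsRot q m k) = f.coeff k := by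
      rw [hg, Polynomial.finset_sum_coeff]
      rw [Finset.sum_eq_single k]
      · rw [Polynomial.coeff_C_mul, Polynomial.coeff_X_pow, if_pos rfl, mul_one]
      · intro j hj hjk
        rw [Polynomial.coeff_C_mul, Polynomial.coeff_X_pow, if_neg, mul_zero]
        intro he
        apply hjk
        have hlj := qsRot_leftInv hq1 (mem_range.1 hj)
        have hlk := qsRot_leftInv hq1 hk
        rw [he] at hlk
        omega
      · intro h; exact absurd (mem_range.2 hk) h
    rw [← hgf] at *
    exact h1
  refine ⟨∑ k ∈ range N, MvPolynomial.monomial (d k) (f.coeff k), ?_, ?_⟩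
  · -- symmetry
    rw [map_sum]
    have hmono : ∀ k ∈ range N,
        MvPolynomial.rename (finRotate (m+1)) (MvPolynomial.monomial (d k) (f.coeff k))
          = MvPolynomial.monomial (d (qsRot q m k)) (f.coeff (qsRot q m k)) := by
      intro k hk
      have hk' := mem_range.1 hk
      rw [MvPolynomial.rename_monomial, hcoeff k hk']
      have hD : Finsupp.mapDomain (⇑(finRotate (m+1))) (d k) = d (qsRot q m k) := by
        ext j
        obtain ⟨i, rfl⟩ := (finRotate (m+1)).surjective j
        rw [Finsupp.mapDomain_apply (finRotate (m+1)).injective]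
        rw [hdapp, hdapp]
        rw [finRotate_succ_apply]
        by_cases hi : i = Fin.last m
        · subst hi
          have h2 : ((Fin.last m) + 1 : Fin (m+1)) = 0 := by
            rw [← finRotate_succ_apply, finRotate_last]
          rw [h2]
          simp only [Fin.val_zero, Fin.val_last]
          exact (qsRot_digit_zero hq1 hk').symm
        · have hv : ((i + 1 : Fin (m+1)) : ℕ) = (i : ℕ) + 1 := by
            rw [Fin.val_add_one]; simp [hi]
          rw [hv]
          exact (qsRot_digit_succ hq1 hk' (Fin.val_lt_last hi)).symm
      rw [hD]
    rw [Finset.sum_congr rfl hmono]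
    refine Finset.sum_nbij' (i := fun k => qsRot q m k)
      (j := fun k => q ^ m * (k % q) + k / q) ?_ ?_ ?_ ?_ ?_
    · intro k hk; exact mem_range.2 (qsRot_lt hq1 (mem_range.1 hk))
    · intro k hk; exact mem_range.2 (qsRot_inv_lt hq1 (mem_range.1 hk))
    · intro k hk; exact qsRot_leftInv hq1 (mem_range.1 hk)
    · intro k hk; exact qsRot_rightInv hq1 (mem_range.1 hk)
    · intro k hk; rfl
  · -- evaluation
    rw [map_sum]
    conv_rhs => rw [hf]
    refine Finset.sum_congr rfl fun k hk => ?_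
    have hk' := mem_range.1 hk
    rw [MvPolynomial.aeval_monomial]
    rw [Finsupp.prod_fintype _ _ (fun i => pow_zero _)]
    have hexp : ∏ i : Fin (m+1), ((X : K[X]) ^ q ^ (i : ℕ)) ^ (d k i) = X ^ k := by
      have h1 : ∀ i : Fin (m+1),
          ((X : K[X]) ^ q ^ (i : ℕ)) ^ (d k i) = X ^ ((k / q ^ (i : ℕ) % q) * q ^ (i : ℕ)) := by
        intro i; rw [hdapp, ← pow_mul, mul_comm]
      rw [Finset.prod_congr rfl fun i _ => h1 i]
      rw [Finset.prod_pow_eq_pow_sum]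
      congr 1
      rw [Fin.sum_univ_eq_sum_range (fun i => k / q ^ i % q * q ^ i)]
      rw [qs_digit_sum]
      exact Nat.mod_eq_of_lt hk'
    rw [hexp, Polynomial.algebraMap_eq]


/-- A polynomial `f(t) ∈ F_{q^n}[t]` of degree `< q^n` is
`(n,q)`-quasi-symmetric (i.e. `f(t) = F(t, t^q, …, t^{q^{n-1}})` for some polynomial `F` in
`n` variables fixed by the cyclic permutation of the variables) if and only if
`f(t^q) ≡ f(t) mod (t^{q^n} - t)`. -/
theorem quasiSymmetric_iff_frobenius_congruent (q n : ℕ) (hq : IsPrimePow q) (hn : 1 ≤ n)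
    (K : Type*) [Field K] [Fintype K] (hK : Fintype.card K = q ^ n)
    (f : Polynomial K) (hdeg : f.natDegree < q ^ n) :
    (∃ F : MvPolynomial (Fin n) K, MvPolynomial.rename (finRotate n) F = F ∧
        (MvPolynomial.aeval fun i : Fin n => (Polynomial.X : Polynomial K) ^ q ^ (i : ℕ)) F = f)
      ↔ (Polynomial.X ^ q ^ n - Polynomial.X : Polynomial K) ∣
          f.comp (Polynomial.X ^ q) - f := by
  obtain ⟨m, rfl⟩ : ∃ m, n = m + 1 := ⟨n - 1, by omega⟩
  have hq2 : 2 ≤ q := hq.two_le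
  constructor
  · rintro ⟨F, hsym, rfl⟩
    exact qs_fwd q m hq2 K F hsym
  · intro hdvd
    exact qs_bwd q m hq2 K f hdeg hdvd
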